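/- For n → ∞ and θ₁, θ₂ ∈ (0,1), the min-entropy slope r_∞(θ₁,θ₂) = lim_{n→∞} (1/(1-n)) log λₙ(θ₁,θ₂) equals -log[(1-θ₁)(1-θ₂)] whenever θ₁/(1-θ₁) ≤ (1-θ₁)(1-θ₂) and θ₂/(1-θ₂) ≤ (1-θ₁)(1-θ₂). -/

import Mathlib

set_option maxHeartbeats 1000000


/-- Min-entropy slope: in the regime θᵢ/(1-θᵢ) ≤ (1-θ₁)(1-θ₂) the slope
(1/(1-n)) log λₙ tends to -log((1-θ₁)(1-θ₂)) as n → ∞. -/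
theorem stmt12 (θ₁ θ₂ : ℝ) (hθ₁ : θ₁ ∈ Set.Ioo (0:ℝ) 1) (hθ₂ : θ₂ ∈ Set.Ioo (0:ℝ) 1)
    (h1 : θ₁ / (1 - θ₁) ≤ (1 - θ₁) * (1 - θ₂))
    (h2 : θ₂ / (1 - θ₂) ≤ (1 - θ₁) * (1 - θ₂))
    (lam : ℕ → ℝ)
    (hlam : ∀ n : ℕ, 1 ≤ n → 0 < lam n ∧
      (lam n) ^ 3 = ((1 - θ₁) ^ n * lam n + θ₁ ^ n) * ((1 - θ₂) ^ n * lam n + θ₂ ^ n)) :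
    Filter.Tendsto (fun n : ℕ => 1 / (1 - (n : ℝ)) * Real.log (lam n))
      Filter.atTop (nhds (-Real.log ((1 - θ₁) * (1 - θ₂)))) := by
  obtain ⟨hθ₁0, hθ₁1⟩ := hθ₁
  obtain ⟨hθ₂0, hθ₂1⟩ := hθ₂
  set a := 1 - θ₁ with ha
  set b := 1 - θ₂ with hb
  have ha0 : 0 < a := by rw [ha]; linarith
  have hb0 : 0 < b := by rw [hb]; linarith
  have hab : 0 < a * b := mul_pos ha0 hb0
  -- bounds (a*b)^n ≤ lam n ≤ 4 * (a*b)^n for n ≥ 1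
  have hbound : ∀ n : ℕ, 1 ≤ n → (a*b)^n ≤ lam n ∧ lam n ≤ 4 * (a*b)^n := by
    intro n hn
    obtain ⟨hpos, heq⟩ := hlam n hn
    have habn : 0 < (a*b)^n := pow_pos hab n
    have han : 0 < a^n := pow_pos ha0 n
    have hbn : 0 < b^n := pow_pos hb0 n
    have hθ₁n : 0 ≤ θ₁^n := pow_nonneg hθ₁0.le n
    have hθ₂n : 0 ≤ θ₂^n := pow_nonneg hθ₂0.le n
    have habn' : (a*b)^n = a^n * b^n := mul_pow a b n
    -- lower bound
    have hlow : (a*b)^n ≤ lam n := by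
      have key : (a*b)^n * lam n ^ 2 ≤ lam n ^ 3 := by
        rw [heq, habn']
        nlinarith [mul_nonneg (mul_nonneg han.le hpos.le) hθ₂n,
          mul_nonneg (mul_nonneg hbn.le hpos.le) hθ₁n, mul_nonneg hθ₁n hθ₂n]
      have key' : (a*b)^n * lam n ^ 2 ≤ lam n * lam n ^ 2 := by nlinarith [key]
      exact le_of_mul_le_mul_right key' (pow_pos hpos 2)
    -- upper bound
    have hθ₁' : θ₁ ≤ a * (a*b) := by
      have := (div_le_iff₀ ha0).mp h1
      nlinarith
    have hθ₂' : θ₂ ≤ b * (a*b) := by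
      have := (div_le_iff₀ hb0).mp h2
      nlinarith
    have hθ₁pow : θ₁^n ≤ a^n * lam n := by
      calc θ₁^n ≤ (a * (a*b))^n := pow_le_pow_left₀ hθ₁0.le hθ₁' n
        _ = a^n * (a*b)^n := mul_pow _ _ _
        _ ≤ a^n * lam n := by
            exact mul_le_mul_of_nonneg_left hlow han.le
    have hθ₂pow : θ₂^n ≤ b^n * lam n := by
      calc θ₂^n ≤ (b * (a*b))^n := pow_le_pow_left₀ hθ₂0.le hθ₂' n
        _ = b^n * (a*b)^n := mul_pow _ _ _
        _ ≤ b^n * lam n := by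
            exact mul_le_mul_of_nonneg_left hlow hbn.le
    have hup : lam n ≤ 4 * (a*b)^n := by
      have key : lam n ^ 3 ≤ 4 * (a*b)^n * lam n ^ 2 := by
        rw [heq, habn']
        have e1 : a^n * lam n + θ₁^n ≤ 2 * (a^n * lam n) := by linarith
        have e2 : b^n * lam n + θ₂^n ≤ 2 * (b^n * lam n) := by linarith
        have p1 : 0 ≤ a^n * lam n + θ₁^n := by positivity
        have p2 : 0 ≤ b^n * lam n + θ₂^n := by positivity
        nlinarith [mul_nonneg han.le hpos.le, mul_nonneg hbn.le hpos.le]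
      have key' : lam n * lam n ^ 2 ≤ (4 * (a*b)^n) * lam n ^ 2 := by nlinarith [key]
      exact le_of_mul_le_mul_right key' (pow_pos hpos 2)
    exact ⟨hlow, hup⟩
  -- log bounds
  have hlog : ∀ n : ℕ, 1 ≤ n →
      (n : ℝ) * Real.log (a*b) ≤ Real.log (lam n) ∧
      Real.log (lam n) ≤ Real.log 4 + (n : ℝ) * Real.log (a*b) := by
    intro n hn
    obtain ⟨hlow, hup⟩ := hbound n hn
    have habn : 0 < (a*b)^n := pow_pos hab n
    constructor
    · calc (n : ℝ) * Real.log (a*b) = Real.log ((a*b)^n) := (Real.log_pow (a*b) n).symm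
        _ ≤ Real.log (lam n) := Real.log_le_log habn hlow
    · have hpos := (hlam n hn).1
      calc Real.log (lam n) ≤ Real.log (4 * (a*b)^n) := Real.log_le_log hpos hup
        _ = Real.log 4 + (n : ℝ) * Real.log (a*b) := by
            rw [Real.log_mul (by norm_num) (ne_of_gt habn), Real.log_pow]
    -- done
  -- decomposition
  have hdecomp : ∀ n : ℕ,
      1 / (1 - (n:ℝ)) * Real.log (lam n) =
      (n:ℝ) / (1 - n) * Real.log (a*b)
        + 1 / (1 - (n:ℝ)) * (Real.log (lam n) - n * Real.log (a*b)) := by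
    intro n; ring
  have hnull : Filter.Tendsto (fun n : ℕ => 1 / (1 - (n:ℝ))) Filter.atTop (nhds 0) := by
    have h1 : Filter.Tendsto (fun n : ℕ => (n:ℝ) - 1) Filter.atTop Filter.atTop := by
      have h0 := Filter.tendsto_atTop_add_const_right Filter.atTop (-1:ℝ)
        (tendsto_natCast_atTop_atTop (R := ℝ))
      exact h0.congr (fun n => by ring)
    have h3 := h1.inv_tendsto_atTop.neg
    rw [neg_zero] at h3
    refine h3.congr fun n => ?_
    have hinv : (1 - (n:ℝ))⁻¹ = -(((n:ℝ) - 1)⁻¹) := by rw [← inv_neg, neg_sub]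
    rw [one_div, hinv]
    rfl
  -- first term
  have hfirst : Filter.Tendsto (fun n : ℕ => (n:ℝ) / (1 - n) * Real.log (a*b))
      Filter.atTop (nhds (-Real.log (a*b))) := by
    have hq : Filter.Tendsto (fun n : ℕ => (n:ℝ) / (1 - n)) Filter.atTop (nhds (-1)) := by
      have key : ∀ n : ℕ, 2 ≤ n → (n:ℝ) / (1 - n) = -1 + 1 / (1 - (n:ℝ)) := by
        intro n hn
        have hne : (1 : ℝ) - n ≠ 0 := by
          have : (2:ℝ) ≤ n := by exact_mod_cast hn
          linarith
        field_simp
        ring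
      have h2 : Filter.Tendsto (fun n : ℕ => -1 + 1 / (1 - (n:ℝ))) Filter.atTop
          (nhds (-1 + 0)) := (tendsto_const_nhds).add hnull
      rw [add_zero] at h2
      exact h2.congr' (by
        filter_upwards [Filter.eventually_atTop.mpr ⟨2, fun n hn => (key n hn).symm⟩] with n h
        exact h)
    have := hq.mul_const (Real.log (a*b))
    simpa [neg_one_mul] using this
  -- second term tends to 0
  have hsecond : Filter.Tendsto
      (fun n : ℕ => 1 / (1 - (n:ℝ)) * (Real.log (lam n) - n * Real.log (a*b)))
      Filter.atTop (nhds 0) := by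
    apply squeeze_zero_norm'
      (a := fun n : ℕ => |1 / (1 - (n:ℝ))| * Real.log 4)
    · filter_upwards [Filter.eventually_atTop.mpr ⟨1, fun n hn => hn⟩] with n hn
      obtain ⟨hl, hu⟩ := hlog n hn
      rw [norm_mul, Real.norm_eq_abs, Real.norm_eq_abs]
      apply mul_le_mul_of_nonneg_left _ (abs_nonneg _)
      rw [abs_of_nonneg (by linarith)]
      linarith
    · have := (hnull.abs).mul_const (Real.log 4)
      simpa using this
  have total := hfirst.add hsecond
  rw [add_zero] at total
  exact total.congr (fun n => (hdecomp n).symm)
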